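/- Let n, p, q be natural numbers with p ≤ n, let S be a subset of Fin n with |S| = n − p, and let M be a multiset of elements of Fin n of cardinality n − p + q such that every element of S occurs in M with multiplicity at least 1. Let c be the number of indices i ∉ S whose multiplicity in M equals exactly 1 (corrupted indices), and let e be the number of indices i ∈ Fin n whose multiplicity in M is not equal to 1 (erased indices). Then 2·c + e ≤ p + q. -/
import Mathlib


/-- Half-error counting for the trivial indexing scheme over an insertion-deletion
channel: `S` is the set of correctly transmitted indices (`p` deletions, `q`
insertions), `M` is the multiset of received index labels, `c` counts corruptions
(indices outside `S` with multiplicity exactly 1) and `e` counts erasures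
(indices with multiplicity ≠ 1); then `2c + e ≤ p + q`. -/
theorem stmt_0 (n p q : ℕ) (hpn : p ≤ n) (S : Finset (Fin n))
    (hS : S.card = n - p) (M : Multiset (Fin n))
    (hM : Multiset.card M = n - p + q)
    (hcov : ∀ i ∈ S, 1 ≤ M.count i) :
    2 * (Finset.univ.filter (fun i : Fin n => i ∉ S ∧ M.count i = 1)).card
      + (Finset.univ.filter (fun i : Fin n => M.count i ≠ 1)).card
      ≤ p + q := by
  classical
  set A := Finset.univ.filter (fun i : Fin n => M.count i = 1) with hA
  set E := Finset.univ.filter (fun i : Fin n => M.count i ≠ 1) with hE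
  set C := Finset.univ.filter (fun i : Fin n => i ∉ S ∧ M.count i = 1) with hC
  set E₁ := Finset.univ.filter (fun i : Fin n => i ∈ S ∧ M.count i ≠ 1) with hE₁
  set E₂ := Finset.univ.filter (fun i : Fin n => i ∉ S ∧ M.count i ≠ 1) with hE₂
  -- |A| + |E| = n
  have h1 : A.card + E.card = n := by
    rw [hA, hE, Finset.card_filter_add_card_filter_not]
    simp
  -- |C| + |E₂| = p
  have hT : C.card + E₂.card = p := by
    have hsplit : C.card + E₂.card = (Finset.univ.filter (fun i : Fin n => i ∉ S)).card := by
      rw [hC, hE₂, ← Finset.filter_filter, ← Finset.filter_filter,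
        Finset.card_filter_add_card_filter_not]
    rw [hsplit]
    have : (Finset.univ.filter (fun i : Fin n => i ∉ S)).card = n - S.card := by
      simp [Finset.filter_not, Finset.card_sdiff_of_subset (Finset.subset_univ S)]
    rw [this, hS]
    omega
  -- |E| = |E₁| + |E₂|
  have h2 : E.card = E₁.card + E₂.card := by
    have e1 : E₁ = (Finset.univ.filter (fun i : Fin n => M.count i ≠ 1)).filter
        (fun i => i ∈ S) := by
      rw [hE₁, Finset.filter_filter]; ext i; simp; tauto
    have e2 : E₂ = (Finset.univ.filter (fun i : Fin n => M.count i ≠ 1)).filter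
        (fun i => ¬ i ∈ S) := by
      rw [hE₂, Finset.filter_filter]; ext i; simp; tauto
    have : E₁.card + E₂.card = E.card := by
      rw [e1, e2, hE, Finset.card_filter_add_card_filter_not]
    omega
  -- sum of counts over univ
  have hsum : ∑ i : Fin n, M.count i = n - p + q := by
    rw [← hM]
    rw [← Multiset.toFinset_sum_count_eq M]
    apply (Finset.sum_subset (Finset.subset_univ _) _).symm
    intro x _ hx
    simpa [Multiset.count_eq_zero] using hx
  -- key inequality
  have key : A.card + 2 * E₁.card ≤ n - p + q := by
    have hsplit : ∑ i ∈ A, M.count i + ∑ i ∈ E, M.count i = ∑ i : Fin n, M.count i := by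
      rw [hA, hE, Finset.sum_filter_add_sum_filter_not]
    have hAsum : ∑ i ∈ A, M.count i = A.card := by
      have hone : ∀ i ∈ A, M.count i = 1 := fun i hi => by
        rw [hA, Finset.mem_filter] at hi; exact hi.2
      rw [Finset.sum_congr rfl hone, Finset.sum_const, smul_eq_mul, mul_one]
    have hE₁sub : E₁ ⊆ E := by
      intro i hi
      rw [hE₁] at hi
      rw [hE, Finset.mem_filter]
      exact ⟨Finset.mem_univ i, (Finset.mem_filter.mp hi).2.2⟩
    have hE₁sum : 2 * E₁.card ≤ ∑ i ∈ E₁, M.count i := by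
      calc 2 * E₁.card = ∑ _i ∈ E₁, 2 := by rw [Finset.sum_const]; ring
        _ ≤ ∑ i ∈ E₁, M.count i := by
            apply Finset.sum_le_sum
            intro i hi
            rw [hE₁] at hi
            obtain ⟨-, hiS, hne⟩ := Finset.mem_filter.mp hi
            have := hcov i hiS
            omega
    have hEsum : ∑ i ∈ E₁, M.count i ≤ ∑ i ∈ E, M.count i :=
      Finset.sum_le_sum_of_subset hE₁sub
    omega
  omega
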